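/- Let A be a self-dual complex two-form on Minkowski space with invariant a (a² = (1/4)·tr(A·A)). Then the matrix hyperbolic cosine and sine of A satisfy (exp(A) + exp(−A))/2 = cosh(a)·I and (exp(A) − exp(−A))/2 = SH(a)·A. -/

import Mathlib

open Matrix
open scoped Nat

noncomputable section

/-- The Minkowski metric matrix `diag(1,-1,-1,-1)`. -/
def minkEta : Matrix (Fin 4) (Fin 4) ℂ := Matrix.diagonal ![1, -1, -1, -1]

/-- The Levi-Civita symbol `ε(i,j,k,l)`: the sign of `(i,j,k,l)` as a permutation of
`(0,1,2,3)`, and `0` if the indices are not all distinct; `ε(0,1,2,3) = 1`. -/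
def eps (i j k l : Fin 4) : ℂ :=
  Matrix.det (Matrix.of ![Pi.single i 1, Pi.single j 1, Pi.single k 1, Pi.single l 1])

/-- A (complex) two-form on Minkowski space: `Fᵀ·η + η·F = 0`. -/
def IsTwoForm (F : Matrix (Fin 4) (Fin 4) ℂ) : Prop :=
  Fᵀ * minkEta + minkEta * F = 0

/-- The Hodge dual of a two-form:
`(*F)^μ_ν = (1/2)·Σ η_{μρ}·ε(ρ,ν,σ,τ)·F^σ_λ·η_{λτ}`. -/
def dual (F : Matrix (Fin 4) (Fin 4) ℂ) : Matrix (Fin 4) (Fin 4) ℂ :=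
  Matrix.of fun μ ν => (1/2 : ℂ) *
    ∑ ρ : Fin 4, ∑ σ : Fin 4, ∑ lam : Fin 4, ∑ τ : Fin 4,
      minkEta μ ρ * eps ρ ν σ τ * F σ lam * minkEta lam τ

/-- A self-dual complex two-form: a two-form with `*A = i·A`. -/
def SelfDual (A : Matrix (Fin 4) (Fin 4) ℂ) : Prop :=
  IsTwoForm A ∧ dual A = Complex.I • A

/-- An anti-self-dual complex two-form: a two-form with `*A = -i·A`. -/
def AntiSelfDual (A : Matrix (Fin 4) (Fin 4) ℂ) : Prop :=
  IsTwoForm A ∧ dual A = (-Complex.I) • A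

/-- A matrix with real entries. -/
def RealEntries (F : Matrix (Fin 4) (Fin 4) ℂ) : Prop :=
  ∀ i j, (F i j).im = 0

/-- `SH z = sinh z / z` for `z ≠ 0` and `SH 0 = 1`. -/
def SH (z : ℂ) : ℂ := if z = 0 then 1 else Complex.sinh z / z

/- ### Auxiliary lemmas -/

theorem my_det_fin_four {R : Type*} [CommRing R] (A : Matrix (Fin 4) (Fin 4) R) :
    A.det =
      A 0 0 * A 1 1 * A 2 2 * A 3 3 - A 0 0 * A 1 1 * A 2 3 * A 3 2 -
        A 0 0 * A 1 2 * A 2 1 * A 3 3 + A 0 0 * A 1 2 * A 2 3 * A 3 1 +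
        A 0 0 * A 1 3 * A 2 1 * A 3 2 - A 0 0 * A 1 3 * A 2 2 * A 3 1 -
        A 0 1 * A 1 0 * A 2 2 * A 3 3 + A 0 1 * A 1 0 * A 2 3 * A 3 2 +
        A 0 1 * A 1 2 * A 2 0 * A 3 3 - A 0 1 * A 1 2 * A 2 3 * A 3 0 -
        A 0 1 * A 1 3 * A 2 0 * A 3 2 + A 0 1 * A 1 3 * A 2 2 * A 3 0 +
        A 0 2 * A 1 0 * A 2 1 * A 3 3 - A 0 2 * A 1 0 * A 2 3 * A 3 1 -
        A 0 2 * A 1 1 * A 2 0 * A 3 3 + A 0 2 * A 1 1 * A 2 3 * A 3 0 +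
        A 0 2 * A 1 3 * A 2 0 * A 3 1 - A 0 2 * A 1 3 * A 2 1 * A 3 0 -
        A 0 3 * A 1 0 * A 2 1 * A 3 2 + A 0 3 * A 1 0 * A 2 2 * A 3 1 +
        A 0 3 * A 1 1 * A 2 0 * A 3 2 - A 0 3 * A 1 1 * A 2 2 * A 3 0 -
        A 0 3 * A 1 2 * A 2 0 * A 3 1 + A 0 3 * A 1 2 * A 2 1 * A 3 0 := by
  rw [Matrix.det_succ_row_zero]
  simp [Fin.sum_univ_succ, Matrix.det_fin_three, Matrix.submatrix_apply, Fin.succ_zero_eq_one,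
    show (Fin.succ 2 : Fin 4) = 3 from rfl, show ((2:Fin 4).succAbove (2:Fin 3)) = 3 from rfl,
    show ((1:Fin 4).succAbove (2:Fin 3)) = 3 from rfl,
    show ((3:Fin 4).succAbove (2:Fin 3)) = 2 from rfl, show (Fin.castSucc 2 : Fin 4) = 2 from rfl]
  ring

theorem my_hasSum_cosh (a : ℂ) :
    HasSum (fun k : ℕ => (a ^ 2) ^ k / (2 * k)!) (Complex.cosh a) := by
  have he : HasSum (fun n : ℕ => a ^ n / n !) (Complex.exp a) := by
    rw [Complex.exp_eq_exp_ℂ]; exact NormedSpace.expSeries_div_hasSum_exp a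
  have ho : HasSum (fun n : ℕ => (-a) ^ n / n !) (Complex.exp (-a)) := by
    rw [Complex.exp_eq_exp_ℂ]; exact NormedSpace.expSeries_div_hasSum_exp (-a)
  have hh : HasSum (fun n : ℕ => (a ^ n / n ! + (-a) ^ n / n !) / 2) (Complex.cosh a) := by
    rw [Complex.cosh]; exact (he.add ho).div_const 2
  have hinj : Function.Injective (fun k : ℕ => 2 * k) := fun x y h => by simpa using h
  have hvan : ∀ n ∉ Set.range (fun k : ℕ => 2 * k),
      (a ^ n / n ! + (-a) ^ n / n !) / 2 = 0 := by
    intro n hn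
    have hodd : Odd n := by
      rcases Nat.even_or_odd n with he' | ho'
      · obtain ⟨r, hr⟩ := he'
        exact absurd ⟨r, show 2 * r = n by omega⟩ hn
      · exact ho'
    rw [hodd.neg_pow]
    ring
  have hcomp := (hinj.hasSum_iff hvan).mpr hh
  refine hcomp.congr_fun fun k => ?_
  show (a ^ 2) ^ k / (2 * k)! = (a ^ (2 * k) / (2 * k)! + (-a) ^ (2 * k) / (2 * k)!) / 2
  rw [pow_mul, pow_mul, neg_sq]
  ring

theorem my_hasSum_SH (a : ℂ) :
    HasSum (fun k : ℕ => (a ^ 2) ^ k / (2 * k + 1)!) (SH a) := by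
  by_cases h : a = 0
  · subst h
    have h0 : ∀ b : ℕ, b ≠ 0 → ((0 : ℂ) ^ 2) ^ b / (2 * b + 1)! = 0 := by
      intro b hb
      rw [show ((0:ℂ)^2) = 0 by ring, zero_pow hb]
      simp
    have := hasSum_single (f := fun k : ℕ => ((0 : ℂ) ^ 2) ^ k / (2 * k + 1)!) 0
      (fun b hb => h0 b hb)
    simpa [SH] using this
  · have he : HasSum (fun n : ℕ => a ^ n / n !) (Complex.exp a) := by
      rw [Complex.exp_eq_exp_ℂ]; exact NormedSpace.expSeries_div_hasSum_exp a
    have ho : HasSum (fun n : ℕ => (-a) ^ n / n !) (Complex.exp (-a)) := by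
      rw [Complex.exp_eq_exp_ℂ]; exact NormedSpace.expSeries_div_hasSum_exp (-a)
    have hh : HasSum (fun n : ℕ => (a ^ n / (n ! : ℂ) - (-a) ^ n / (n ! : ℂ)) / 2) (Complex.sinh a) := by
      rw [Complex.sinh]; exact (he.sub ho).div_const 2
    have hinj : Function.Injective (fun k : ℕ => 2 * k + 1) := fun x y h => by simpa using h
    have hvan : ∀ n ∉ Set.range (fun k : ℕ => 2 * k + 1),
        (a ^ n / (n ! : ℂ) - (-a) ^ n / (n ! : ℂ)) / 2 = 0 := by
      intro n hn
      have heven : Even n := by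
        rcases Nat.even_or_odd n with he' | ho'
        · exact he'
        · obtain ⟨r, hr⟩ := ho'
          exact absurd ⟨r, show 2 * r + 1 = n by omega⟩ hn
      rw [heven.neg_pow]
      ring
    have hcomp := (hinj.hasSum_iff hvan).mpr hh
    have hdiv := hcomp.div_const a
    have : SH a = Complex.sinh a / a := by rw [SH, if_neg h]
    rw [this]
    refine hdiv.congr_fun fun k => ?_
    show (a ^ 2) ^ k / ((2 * k + 1)! : ℂ)
        = (a ^ (2 * k + 1) / ((2 * k + 1)! : ℂ) - (-a) ^ (2 * k + 1) / ((2 * k + 1)! : ℂ)) / 2 / a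
    rw [Odd.neg_pow ⟨k, by ring⟩, show a ^ (2 * k + 1) = (a ^ 2) ^ k * a from by
      rw [pow_succ, pow_mul]]
    field_simp
    ring

theorem my_exp_of_sq (A : Matrix (Fin 4) (Fin 4) ℂ) (a : ℂ) (h : A * A = a ^ 2 • 1) :
    NormedSpace.exp A = Complex.cosh a • (1 : Matrix (Fin 4) (Fin 4) ℂ) + SH a • A := by
  have hsq : A ^ 2 = a ^ 2 • 1 := by rw [sq]; exact h
  have hpe : ∀ k : ℕ, A ^ (2 * k) = ((a ^ 2) ^ k) • (1 : Matrix (Fin 4) (Fin 4) ℂ) := by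
    intro k
    rw [pow_mul, hsq, smul_pow, one_pow]
  have hpo : ∀ k : ℕ, A ^ (2 * k + 1) = ((a ^ 2) ^ k) • A := by
    intro k
    rw [pow_succ, hpe k, smul_mul_assoc, one_mul]
  rw [NormedSpace.exp_eq_tsum ℂ]
  refine HasSum.tsum_eq ?_
  refine HasSum.even_add_odd ?_ ?_
  · have := (my_hasSum_cosh a).smul_const (1 : Matrix (Fin 4) (Fin 4) ℂ)
    refine this.congr_fun fun k => ?_
    rw [hpe k, smul_smul]
    congr 1
    rw [div_eq_inv_mul]
  · have := (my_hasSum_SH a).smul_const A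
    refine this.congr_fun fun k => ?_
    rw [hpo k, smul_smul]
    congr 1
    rw [div_eq_inv_mul]

end

set_option maxHeartbeats 1000000 in
theorem selfDual_cosh_sinh (A : Matrix (Fin 4) (Fin 4) ℂ) (hA : SelfDual A)
    (a : ℂ) (ha : a ^ 2 = (1/4 : ℂ) * Matrix.trace (A * A)) :
    (1/2 : ℂ) • (NormedSpace.exp A + NormedSpace.exp (-A))
        = Complex.cosh a • (1 : Matrix (Fin 4) (Fin 4) ℂ) ∧
      (1/2 : ℂ) • (NormedSpace.exp A - NormedSpace.exp (-A)) = SH a • A := by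
  have t' : ∀ i j, (Aᵀ * minkEta + minkEta * A) i j = 0 := fun i j => by rw [hA.1]; rfl
  have d' : ∀ i j, dual A i j = Complex.I * A i j := fun i j => by rw [hA.2]; simp
  have q00 := t' 0 0; have q11 := t' 1 1; have q22 := t' 2 2; have q33 := t' 3 3
  have q01 := t' 0 1; have q02 := t' 0 2; have q03 := t' 0 3
  have q12 := t' 1 2; have q13 := t' 1 3; have q23 := t' 2 3
  simp [Matrix.mul_apply, Matrix.add_apply, minkEta, Fin.sum_univ_four,
    Matrix.diagonal_apply, Matrix.transpose_apply] at q00 q11 q22 q33 q01 q02 q03 q12 q13 q23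
  have d01 := d' 0 1
  simp [dual, eps, minkEta, Fin.sum_univ_four, Matrix.diagonal_apply,
    my_det_fin_four, Matrix.of_apply, Pi.single_apply] at d01
  have d02 := d' 0 2
  simp [dual, eps, minkEta, Fin.sum_univ_four, Matrix.diagonal_apply,
    my_det_fin_four, Matrix.of_apply, Pi.single_apply] at d02
  have d03 := d' 0 3
  simp [dual, eps, minkEta, Fin.sum_univ_four, Matrix.diagonal_apply,
    my_det_fin_four, Matrix.of_apply, Pi.single_apply] at d03
  have v10 : A 1 0 = A 0 1 := by linear_combination -q01
  have v20 : A 2 0 = A 0 2 := by linear_combination -q02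
  have v30 : A 3 0 = A 0 3 := by linear_combination -q03
  have v23 : A 2 3 = -Complex.I * A 0 1 := by linear_combination -d01 - q23 / 2
  have v32 : A 3 2 = Complex.I * A 0 1 := by linear_combination d01 - q23 / 2
  have v13 : A 1 3 = Complex.I * A 0 2 := by linear_combination d02 - q13 / 2
  have v31 : A 3 1 = -Complex.I * A 0 2 := by linear_combination -d02 - q13 / 2
  have v12 : A 1 2 = -Complex.I * A 0 3 := by linear_combination -d03 - q12 / 2
  have v21 : A 2 1 = Complex.I * A 0 3 := by linear_combination d03 - q12 / 2
  have key : A * A = a ^ 2 • (1 : Matrix (Fin 4) (Fin 4) ℂ) := by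
    rw [ha]
    ext i j
    fin_cases i <;> fin_cases j <;>
      simp [Matrix.mul_apply, Matrix.smul_apply, Matrix.one_apply, Matrix.trace, Matrix.diag,
        Fin.sum_univ_four, q00, q11, q22, q33, v10, v20, v30, v23, v32, v13, v31, v12, v21] <;>
      ring_nf <;> simp [Complex.I_sq] <;> ring
  have h1 : NormedSpace.exp A = Complex.cosh a • (1 : Matrix (Fin 4) (Fin 4) ℂ) + SH a • A :=
    my_exp_of_sq A a key
  have h2 : NormedSpace.exp (-A)
      = Complex.cosh a • (1 : Matrix (Fin 4) (Fin 4) ℂ) + SH a • (-A) :=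
    my_exp_of_sq (-A) a (by rw [neg_mul_neg]; exact key)
  constructor
  · rw [h1, h2]; module
  · rw [h1, h2]; module
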